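/- Let N and n be positive integers such that N does not divide n and N does not divide 2n. Define the 2N×2N real matrix J in block form J = [[G, B],[F, C]], where for j, k ∈ {1,…,N}: G_{jk} = cos(2πn(k−j)/N), B_{jk} = (1/2) sin(2πn(k−j)/N), F_{jk} = −2 sin(2πn(k−j)/N), and C_{jk} = cos(2πn(k−j)/N) − 1. (J is the Jacobian of the rescaled matrix Kuramoto flow linearized at the twist state with winding number n.) Then the characteristic polynomial of J is X^{2N−3}(X + N)(X − N)^2; equivalently, the eigenvalues of J are −N with multiplicity 1, N with multiplicity 2, and 0 with multiplicity 2N−3. In particular J has a positive eigenvalue, so the twist state is linearly unstable. -/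

import Mathlib

open Matrix Polynomial Real

/-- The `θ`-`θ` block of the twist-state Jacobian: `G_{jk} = cos(2πn(k−j)/N)`. -/
noncomputable def twistBlockG (N n : ℕ) : Matrix (Fin N) (Fin N) ℝ :=
  Matrix.of fun j k =>
    Real.cos (2 * Real.pi * (n : ℝ) * (((k : ℕ) : ℝ) - ((j : ℕ) : ℝ)) / (N : ℝ))

/-- The `θ`-`Δλ` block of the twist-state Jacobian: `B_{jk} = (1/2) sin(2πn(k−j)/N)`. -/
noncomputable def twistBlockB (N n : ℕ) : Matrix (Fin N) (Fin N) ℝ :=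
  Matrix.of fun j k =>
    (1 / 2 : ℝ) * Real.sin (2 * Real.pi * (n : ℝ) * (((k : ℕ) : ℝ) - ((j : ℕ) : ℝ)) / (N : ℝ))

/-- The `Δλ`-`θ` block of the twist-state Jacobian: `F_{jk} = −2 sin(2πn(k−j)/N)`. -/
noncomputable def twistBlockF (N n : ℕ) : Matrix (Fin N) (Fin N) ℝ :=
  Matrix.of fun j k =>
    (-2 : ℝ) * Real.sin (2 * Real.pi * (n : ℝ) * (((k : ℕ) : ℝ) - ((j : ℕ) : ℝ)) / (N : ℝ))

/-- The `Δλ`-`Δλ` block of the twist-state Jacobian: `C_{jk} = cos(2πn(k−j)/N) − 1`. -/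
noncomputable def twistBlockC (N n : ℕ) : Matrix (Fin N) (Fin N) ℝ :=
  Matrix.of fun j k =>
    Real.cos (2 * Real.pi * (n : ℝ) * (((k : ℕ) : ℝ) - ((j : ℕ) : ℝ)) / (N : ℝ)) - 1

/-- The Jacobian of the rescaled matrix Kuramoto flow linearized at the twist state
with winding number `n`. -/
noncomputable def twistJacobian (N n : ℕ) : Matrix (Fin N ⊕ Fin N) (Fin N ⊕ Fin N) ℝ :=
  Matrix.fromBlocks (twistBlockG N n) (twistBlockB N n) (twistBlockF N n) (twistBlockC N n)

namespace TwistAux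

lemma exp_sum_zero (N m : ℕ) (hN : 0 < N) (h : ¬ N ∣ m) :
    ∑ j : Fin N, Complex.exp (2 * Real.pi * Complex.I * m * j / N) = 0 := by
  have hN0 : (N : ℂ) ≠ 0 := Nat.cast_ne_zero.mpr hN.ne'
  set ζ : ℂ := Complex.exp (2 * Real.pi * Complex.I * m / N) with hζ
  have hterm : ∀ j : Fin N, Complex.exp (2 * Real.pi * Complex.I * m * j / N) = ζ ^ (j : ℕ) := by
    intro j
    rw [hζ, ← Complex.exp_nat_mul]
    congr 1
    ring
  have hζN : ζ ^ N = 1 := by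
    rw [hζ, ← Complex.exp_nat_mul]
    rw [show (N : ℂ) * (2 * Real.pi * Complex.I * m / N) = m * (2 * Real.pi * Complex.I) by
      field_simp]
    exact Complex.exp_nat_mul_two_pi_mul_I m
  have h2pi : (2 * (Real.pi : ℂ) * Complex.I) ≠ 0 := by
    simp [Real.pi_ne_zero, Complex.I_ne_zero, Complex.ofReal_ne_zero]
  have hζ1 : ζ ≠ 1 := by
    rw [hζ]
    intro hone
    rw [Complex.exp_eq_one_iff] at hone
    obtain ⟨k, hk⟩ := hone
    apply h
    rw [div_eq_iff hN0] at hk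
    have hm : (m : ℂ) = (k : ℂ) * N := by
      apply mul_left_cancel₀ h2pi
      linear_combination hk
    have hm' : (m : ℤ) = k * N := by exact_mod_cast hm
    exact Int.natCast_dvd_natCast.mp ⟨k, by rw [hm']; ring⟩
  calc ∑ j : Fin N, Complex.exp (2 * Real.pi * Complex.I * m * j / N)
      = ∑ j : Fin N, ζ ^ (j : ℕ) := Finset.sum_congr rfl fun j _ => hterm j
    _ = ∑ i ∈ Finset.range N, ζ ^ i := Fin.sum_univ_eq_sum_range _ _
    _ = (ζ ^ N - 1) / (ζ - 1) := geom_sum_eq hζ1 N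
    _ = 0 := by rw [hζN]; simp

lemma sum_cos (N m : ℕ) (hN : 0 < N) (h : ¬ N ∣ m) :
    ∑ j : Fin N, Real.cos (2 * Real.pi * m * j / N) = 0 := by
  have h0 := exp_sum_zero N m hN h
  have hre : ∀ j : Fin N, Real.cos (2 * Real.pi * m * j / N)
      = (Complex.exp (2 * Real.pi * Complex.I * m * j / N)).re := by
    intro j
    rw [show (2 * Real.pi * Complex.I * m * j / N : ℂ)
        = ((2 * Real.pi * m * j / N : ℝ) : ℂ) * Complex.I by push_cast; ring]
    exact (Complex.exp_ofReal_mul_I_re _).symm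
  calc ∑ j : Fin N, Real.cos (2 * Real.pi * m * j / N)
      = ∑ j : Fin N, (Complex.exp (2 * Real.pi * Complex.I * m * j / N)).re :=
        Finset.sum_congr rfl fun j _ => hre j
    _ = (∑ j : Fin N, Complex.exp (2 * Real.pi * Complex.I * m * j / N)).re :=
        (Complex.re_sum _ _).symm
    _ = 0 := by rw [h0]; simp

lemma sum_sin (N m : ℕ) (hN : 0 < N) (h : ¬ N ∣ m) :
    ∑ j : Fin N, Real.sin (2 * Real.pi * m * j / N) = 0 := by
  have h0 := exp_sum_zero N m hN h
  have hre : ∀ j : Fin N, Real.sin (2 * Real.pi * m * j / N)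
      = (Complex.exp (2 * Real.pi * Complex.I * m * j / N)).im := by
    intro j
    rw [show (2 * Real.pi * Complex.I * m * j / N : ℂ)
        = ((2 * Real.pi * m * j / N : ℝ) : ℂ) * Complex.I by push_cast; ring]
    exact (Complex.exp_ofReal_mul_I_im _).symm
  calc ∑ j : Fin N, Real.sin (2 * Real.pi * m * j / N)
      = ∑ j : Fin N, (Complex.exp (2 * Real.pi * Complex.I * m * j / N)).im :=
        Finset.sum_congr rfl fun j _ => hre j
    _ = (∑ j : Fin N, Complex.exp (2 * Real.pi * Complex.I * m * j / N)).im :=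
        (Complex.im_sum _ _).symm
    _ = 0 := by rw [h0]; simp

/-- The phase `2πnj/N`. -/
noncomputable def ph (N n : ℕ) (j : ℕ) : ℝ := 2 * Real.pi * n * j / N

variable {N n : ℕ}

lemma sumC (hN : 0 < N) (h1 : ¬ N ∣ n) : ∑ j : Fin N, Real.cos (ph N n j) = 0 :=
  sum_cos N n hN h1

lemma sumS (hN : 0 < N) (h1 : ¬ N ∣ n) : ∑ j : Fin N, Real.sin (ph N n j) = 0 :=
  sum_sin N n hN h1

lemma two_ph (N n j : ℕ) : 2 * ph N n j = 2 * Real.pi * (2 * n : ℕ) * j / N := by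
  unfold ph; push_cast; ring

lemma sumC2 (hN : 0 < N) (h2 : ¬ N ∣ 2 * n) : ∑ j : Fin N, Real.cos (2 * ph N n j) = 0 := by
  calc ∑ j : Fin N, Real.cos (2 * ph N n j)
      = ∑ j : Fin N, Real.cos (2 * Real.pi * (2 * n : ℕ) * j / N) :=
        Finset.sum_congr rfl fun j _ => by rw [two_ph]
    _ = 0 := sum_cos N (2 * n) hN h2

lemma sumS2 (hN : 0 < N) (h2 : ¬ N ∣ 2 * n) : ∑ j : Fin N, Real.sin (2 * ph N n j) = 0 := by
  calc ∑ j : Fin N, Real.sin (2 * ph N n j)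
      = ∑ j : Fin N, Real.sin (2 * Real.pi * (2 * n : ℕ) * j / N) :=
        Finset.sum_congr rfl fun j _ => by rw [two_ph]
    _ = 0 := sum_sin N (2 * n) hN h2

lemma sumCC (hN : 0 < N) (h2 : ¬ N ∣ 2 * n) :
    ∑ j : Fin N, Real.cos (ph N n j) * Real.cos (ph N n j) = N / 2 := by
  have h := sumC2 hN h2
  calc ∑ j : Fin N, Real.cos (ph N n j) * Real.cos (ph N n j)
      = ∑ j : Fin N, (1 / 2 + Real.cos (2 * ph N n j) / 2) := by
        refine Finset.sum_congr rfl fun j _ => ?_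
        rw [← pow_two, Real.cos_sq]
    _ = ∑ _j : Fin N, (1 / 2 : ℝ) + (∑ j : Fin N, Real.cos (2 * ph N n j)) / 2 := by
        rw [Finset.sum_add_distrib, Finset.sum_div]
    _ = N / 2 := by
        rw [h, Finset.sum_const, Finset.card_univ, Fintype.card_fin]
        simp
        ring

lemma sumSS (hN : 0 < N) (h2 : ¬ N ∣ 2 * n) :
    ∑ j : Fin N, Real.sin (ph N n j) * Real.sin (ph N n j) = N / 2 := by
  have h := sumC2 hN h2
  calc ∑ j : Fin N, Real.sin (ph N n j) * Real.sin (ph N n j)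
      = ∑ j : Fin N, (1 / 2 - Real.cos (2 * ph N n j) / 2) := by
        refine Finset.sum_congr rfl fun j _ => ?_
        rw [← pow_two, Real.sin_sq, Real.cos_sq]
        ring
    _ = ∑ _j : Fin N, (1 / 2 : ℝ) - (∑ j : Fin N, Real.cos (2 * ph N n j)) / 2 := by
        rw [Finset.sum_sub_distrib, Finset.sum_div]
    _ = N / 2 := by
        rw [h, Finset.sum_const, Finset.card_univ, Fintype.card_fin]
        simp
        ring

lemma sumCS (hN : 0 < N) (h2 : ¬ N ∣ 2 * n) :
    ∑ j : Fin N, Real.cos (ph N n j) * Real.sin (ph N n j) = 0 := by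
  have h := sumS2 hN h2
  calc ∑ j : Fin N, Real.cos (ph N n j) * Real.sin (ph N n j)
      = ∑ j : Fin N, Real.sin (2 * ph N n j) / 2 := by
        refine Finset.sum_congr rfl fun j _ => ?_
        rw [Real.sin_two_mul]; ring
    _ = 0 := by rw [← Finset.sum_div, h]; simp

lemma sumSC (hN : 0 < N) (h2 : ¬ N ∣ 2 * n) :
    ∑ j : Fin N, Real.sin (ph N n j) * Real.cos (ph N n j) = 0 := by
  rw [show (fun j : Fin N => Real.sin (ph N n j) * Real.cos (ph N n j))
    = fun j : Fin N => Real.cos (ph N n j) * Real.sin (ph N n j) from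
      funext fun j => mul_comm _ _]
  exact sumCS hN h2

/-- The left factor in the rank-5 factorization of the Jacobian. -/
noncomputable def Umat (N n : ℕ) : Matrix (Fin N ⊕ Fin N) (Fin 5) ℝ :=
  Matrix.of (Sum.elim
    (fun j i => ![Real.cos (ph N n j), Real.sin (ph N n j), 0, 0, 0] i)
    (fun j i => ![0, 0, Real.cos (ph N n j), Real.sin (ph N n j), 1] i))

/-- The right factor in the rank-5 factorization of the Jacobian. -/
noncomputable def Vmat (N n : ℕ) : Matrix (Fin 5) (Fin N ⊕ Fin N) ℝ :=
  Matrix.of fun i => Sum.elim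
    (fun j : Fin N => ![Real.cos (ph N n j), Real.sin (ph N n j),
        -2 * Real.sin (ph N n j), 2 * Real.cos (ph N n j), 0] i)
    (fun j : Fin N => ![1 / 2 * Real.sin (ph N n j), -(1 / 2) * Real.cos (ph N n j),
        Real.cos (ph N n j), Real.sin (ph N n j), -1] i)

lemma factor (N n : ℕ) : twistJacobian N n = Umat N n * Vmat N n := by
  have key : ∀ a b : Fin N, 2 * Real.pi * (n : ℝ) * (((b : ℕ) : ℝ) - ((a : ℕ) : ℝ)) / (N : ℝ)
      = ph N n b - ph N n a := by
    intro a b; unfold ph; ring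
  ext r r'
  rcases r with j | j <;> rcases r' with k | k <;>
    simp only [twistJacobian, fromBlocks_apply₁₁, fromBlocks_apply₁₂, fromBlocks_apply₂₁,
      fromBlocks_apply₂₂, twistBlockG, twistBlockB, twistBlockF, twistBlockC,
      Matrix.of_apply, Matrix.mul_apply, Fin.sum_univ_five, Umat, Vmat,
      Sum.elim_inl, Sum.elim_inr, key, Real.cos_sub, Real.sin_sub,
      Matrix.cons_val_zero, Matrix.cons_val_one, Matrix.head_cons, Matrix.cons_val_two,
      Matrix.tail_cons, Matrix.cons_val_three, Matrix.cons_val_four] <;>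
    ring

/-- The 5×5 matrix obtained by multiplying the factors in the other order. -/
noncomputable def Kmat (N : ℕ) : Matrix (Fin 5) (Fin 5) ℝ :=
  !![(N : ℝ) / 2, 0, 0, (N : ℝ) / 4, 0;
     0, (N : ℝ) / 2, -((N : ℝ) / 4), 0, 0;
     0, -(N : ℝ), (N : ℝ) / 2, 0, 0;
     (N : ℝ), 0, 0, (N : ℝ) / 2, 0;
     0, 0, 0, 0, -(N : ℝ)]

lemma VU (N n : ℕ) (hN : 0 < N) (h1 : ¬ N ∣ n) (h2 : ¬ N ∣ 2 * n) :
    Vmat N n * Umat N n = Kmat N := by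
  have hC := sumC hN h1; have hS := sumS hN h1
  have hCC := sumCC hN h2; have hSS := sumSS hN h2
  have hCS := sumCS hN h2; have hSC := sumSC hN h2
  ext i i'
  fin_cases i <;> fin_cases i' <;>
    simp [Matrix.mul_apply, Fintype.sum_sum_type, Umat, Vmat, Kmat,
      mul_assoc, ← Finset.mul_sum, hCC, hSS, hCS, hSC, hC, hS,
      Matrix.vecHead, Matrix.vecTail] <;>
    try ring

lemma charpoly_K (N : ℕ) :
    (Kmat N).charpoly = X ^ 2 * (X + C (N : ℝ)) * (X - C (N : ℝ)) ^ 2 := by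
  apply Polynomial.funext
  intro x
  rw [Matrix.charpoly, ← Polynomial.coe_evalRingHom, RingHom.map_det, RingHom.mapMatrix_apply]
  have hm : (Matrix.charmatrix (Kmat N)).map (Polynomial.evalRingHom x)
      = !![x - (N : ℝ) / 2, 0, 0, -((N : ℝ) / 4), 0;
           0, x - (N : ℝ) / 2, (N : ℝ) / 4, 0, 0;
           0, (N : ℝ), x - (N : ℝ) / 2, 0, 0;
           -(N : ℝ), 0, 0, x - (N : ℝ) / 2, 0;
           0, 0, 0, 0, x + (N : ℝ)] := by
    ext i j
    fin_cases i <;> fin_cases j <;>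
      simp [Matrix.charmatrix_apply, Kmat, Matrix.map_apply, Matrix.diagonal_apply,
        Matrix.vecHead, Matrix.vecTail] <;> ring
  rw [hm]
  rw [show (Polynomial.evalRingHom x) (X ^ 2 * (X + C (N : ℝ)) * (X - C (N : ℝ)) ^ 2)
      = x ^ 2 * (x + (N : ℝ)) * (x - (N : ℝ)) ^ 2 by simp]
  simp [Matrix.det_succ_row_zero, Fin.sum_univ_succ, Fin.succAbove,
    Fin.castSucc, Fin.castAdd, Fin.castLE, Matrix.vecHead, Matrix.vecTail]
  ring

lemma det_key {F : Type*} [Field F] {m p : Type*} [Fintype m] [Fintype p]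
    [DecidableEq m] [DecidableEq p]
    (x : F) (hx : x ≠ 0) (A : Matrix m p F) (B : Matrix p m F) :
    x ^ Fintype.card p * Matrix.det (x • (1 : Matrix m m F) - A * B)
      = x ^ Fintype.card m * Matrix.det (x • (1 : Matrix p p F) - B * A) := by
  have e1 : x • (1 : Matrix m m F) - A * B = x • ((1 : Matrix m m F) - x⁻¹ • (A * B)) := by
    rw [smul_sub, smul_smul, mul_inv_cancel₀ hx, one_smul]
  have e2 : x • (1 : Matrix p p F) - B * A = x • ((1 : Matrix p p F) - x⁻¹ • (B * A)) := by
    rw [smul_sub, smul_smul, mul_inv_cancel₀ hx, one_smul]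
  rw [e1, e2, Matrix.det_smul, Matrix.det_smul,
    show (1 : Matrix m m F) - x⁻¹ • (A * B) = 1 - (x⁻¹ • A) * B by rw [Matrix.smul_mul],
    show (1 : Matrix p p F) - x⁻¹ • (B * A) = 1 - B * (x⁻¹ • A) by rw [Matrix.mul_smul],
    Matrix.det_one_sub_mul_comm]
  ring

end TwistAux

set_option maxRecDepth 8000

/-- if `N ∤ n` and `N ∤ 2n`, the characteristic polynomial of the twist-state
Jacobian `J` is `X^{2N−3}(X + N)(X − N)²`, i.e. the eigenvalues are `−N` (multiplicity 1),
`N` (multiplicity 2) and `0` (multiplicity `2N−3`); in particular `J` has a positive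
eigenvalue, so the twist state is linearly unstable. -/
theorem twist_state_jacobian_charpoly
    (N n : ℕ) (hN : 0 < N) (hn : 0 < n) (h1 : ¬ N ∣ n) (h2 : ¬ N ∣ 2 * n) :
    (twistJacobian N n).charpoly
        = X ^ (2 * N - 3) * (X + Polynomial.C (N : ℝ)) * (X - Polynomial.C (N : ℝ)) ^ 2
      ∧ ∃ x : ℝ, 0 < x ∧ (twistJacobian N n).charpoly.IsRoot x := by
  have hN2 : 2 ≤ N := by
    rcases Nat.lt_or_ge N 2 with h | h
    · have hN1 : N = 1 := by omega
      subst hN1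
      exact absurd (one_dvd n) h1
    · exact h
  have key : (X : ℝ[X]) ^ 5 * (twistJacobian N n).charpoly
      = X ^ (2 * N) * (TwistAux.Kmat N).charpoly := by
    set F := FractionRing ℝ[X]
    have hinj : Function.Injective (algebraMap ℝ[X] F) := IsFractionRing.injective _ _
    apply hinj
    set f := algebraMap ℝ[X] F with hf
    have hx : f X ≠ 0 := by
      intro h
      exact Polynomial.X_ne_zero (hinj (by rw [h, map_zero]))
    set g : ℝ →+* F := (f : ℝ[X] →+* F).comp Polynomial.C with hg
    have hcm : ∀ (q : Type) (_ : Fintype q) (_ : DecidableEq q) (M : Matrix q q ℝ),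
        (Matrix.charmatrix M).map (f : ℝ[X] →+* F)
          = f X • (1 : Matrix q q F) - M.map g := by
      intro q _ _ M
      ext i j
      by_cases h : i = j
      · subst h
        simp [Matrix.charmatrix_apply, Matrix.map_apply, Matrix.smul_apply,
          Matrix.one_apply_eq, hg, map_sub]
      · simp [Matrix.charmatrix_apply, Matrix.map_apply, Matrix.smul_apply,
          Matrix.one_apply_ne h, Matrix.diagonal_apply_ne _ h, hg, map_sub]
    have hc5 : Fintype.card (Fin 5) = 5 := by simp
    have hcNN : Fintype.card (Fin N ⊕ Fin N) = 2 * N := by simp [two_mul]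
    have e1 : f ((X : ℝ[X]) ^ 5 * (twistJacobian N n).charpoly)
        = f X ^ Fintype.card (Fin 5)
          * Matrix.det (f X • (1 : Matrix (Fin N ⊕ Fin N) (Fin N ⊕ Fin N) F)
              - (TwistAux.Umat N n).map g * (TwistAux.Vmat N n).map g) := by
      rw [_root_.map_mul, map_pow, Matrix.charpoly, RingHom.map_det, RingHom.mapMatrix_apply,
        hcm _ _ _ (twistJacobian N n), TwistAux.factor N n, Matrix.map_mul, hc5]
    have e2 : f ((X : ℝ[X]) ^ (2 * N) * (TwistAux.Kmat N).charpoly)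
        = f X ^ Fintype.card (Fin N ⊕ Fin N)
          * Matrix.det (f X • (1 : Matrix (Fin 5) (Fin 5) F)
              - (TwistAux.Vmat N n).map g * (TwistAux.Umat N n).map g) := by
      rw [_root_.map_mul, map_pow, Matrix.charpoly, RingHom.map_det, RingHom.mapMatrix_apply,
        hcm _ _ _ (TwistAux.Kmat N), ← Matrix.map_mul, TwistAux.VU N n hN h1 h2, hcNN]
    rw [e1, e2]
    exact TwistAux.det_key (f X) hx _ _
  have hcp : (twistJacobian N n).charpoly
      = X ^ (2 * N - 3) * (X + Polynomial.C (N : ℝ)) * (X - Polynomial.C (N : ℝ)) ^ 2 := by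
    have h5 : (X : ℝ[X]) ^ 5 ≠ 0 := pow_ne_zero _ Polynomial.X_ne_zero
    apply mul_left_cancel₀ h5
    rw [key, TwistAux.charpoly_K N]
    have harith : 2 * N + 2 = 5 + (2 * N - 3) := by omega
    calc (X : ℝ[X]) ^ (2 * N) * (X ^ 2 * (X + C (N : ℝ)) * (X - C (N : ℝ)) ^ 2)
        = X ^ (2 * N + 2) * ((X + C (N : ℝ)) * (X - C (N : ℝ)) ^ 2) := by
          rw [pow_add]; ring
      _ = X ^ 5 * (X ^ (2 * N - 3) * (X + C (N : ℝ)) * (X - C (N : ℝ)) ^ 2) := by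
          rw [harith, pow_add]; ring
  refine ⟨hcp, (N : ℝ), Nat.cast_pos.mpr hN, ?_⟩
  rw [hcp]
  simp [Polynomial.IsRoot]
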